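/- Fix an integer r ≥ 2 and work in the field F = ℚ(P_1,…,P_r, Q_0,…,Q_{r−2}, Λ)(z) of rational functions in z over the rational function field in the parameters P_1,…,P_r, Q_0,…,Q_{r−2}, Λ. Define x := −Λ · ∏_{i=1}^{r}(P_i + z) / ∏_{i=0}^{r−2}(Q_i − z) and y := −z · ∏_{i=0}^{r−2}(Q_i − z) / (Λ · ∏_{i=1}^{r}(P_i + z)), elements of F. Then x and y satisfy the algebraic relation Σ_{i=0}^{r} (−y)^{r−i} · ( e_i(P_1,…,P_r)/(−x)^i + (−1)^r e_{i−1}(Q_0,Q_1,…,Q_{r−2})/(Λ · x^{i−1}) ) = 0, with the convention e_{−1} := 0. (This is the statement that the rational parameterization (4.6) of the paper is a parameterization of the spectral curve (4.5).) -/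

import Mathlib

open MvPolynomial

noncomputable section Stmt8

/-- The indeterminates `P_1,…,P_r`, `Q_0,…,Q_{r−2}`, `Λ` and `z`. -/
abbrev Idx (r : ℕ) : Type := Fin r ⊕ (Fin (r - 1) ⊕ Fin 2)

/-- The field `F = ℚ(P_1,…,P_r, Q_0,…,Q_{r−2}, Λ)(z)` of rational functions in the
independent indeterminates `P_1,…,P_r, Q_0,…,Q_{r−2}, Λ, z` over `ℚ`. -/
abbrev FF (r : ℕ) : Type := FractionRing (MvPolynomial (Idx r) ℚ)

/-- Embedding of the indeterminates into `F`. -/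
def par (r : ℕ) (v : Idx r) : FF r := algebraMap (MvPolynomial (Idx r) ℚ) (FF r) (X v)

/-- `P_1, …, P_r` (zero-indexed). -/
def Pv (r : ℕ) (i : Fin r) : FF r := par r (Sum.inl i)

/-- `Q_0, …, Q_{r−2}` (indexed by `Fin (r−1)`; `Q_j = Qv ⟨j⟩`). -/
def Qv (r : ℕ) (j : Fin (r - 1)) : FF r := par r (Sum.inr (Sum.inl j))

/-- `Λ`. -/
def Lam (r : ℕ) : FF r := par r (Sum.inr (Sum.inr 0))

/-- `z`. -/
def zz (r : ℕ) : FF r := par r (Sum.inr (Sum.inr 1))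

/-- The elementary symmetric polynomial `e_s(P_1,…,P_r)` evaluated in `F`. -/
def eP (r s : ℕ) : FF r :=
  ∑ t ∈ Finset.powersetCard s (Finset.univ : Finset (Fin r)), ∏ i ∈ t, Pv r i

/-- The elementary symmetric polynomial `e_s(Q_0,…,Q_{r−2})` evaluated in `F`. -/
def eQ (r s : ℕ) : FF r :=
  ∑ t ∈ Finset.powersetCard s (Finset.univ : Finset (Fin (r - 1))), ∏ j ∈ t, Qv r j

/-- The rational function `x = −Λ ∏_{i=1}^{r}(P_i + z) / ∏_{i=0}^{r−2}(Q_i − z)`. -/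
def xf (r : ℕ) : FF r :=
  -Lam r * (∏ i : Fin r, (Pv r i + zz r)) / ∏ j : Fin (r - 1), (Qv r j - zz r)

/-- The rational function `y = −z ∏_{i=0}^{r−2}(Q_i − z) / (Λ ∏_{i=1}^{r}(P_i + z))`. -/
def yf (r : ℕ) : FF r :=
  -zz r * (∏ j : Fin (r - 1), (Qv r j - zz r)) / (Lam r * ∏ i : Fin r, (Pv r i + zz r))


section AuxStmt8

private lemma prod_add_const'8 {R : Type*} [CommRing R] (n : ℕ) (f : Fin n → R) (c : R) :
    ∏ i : Fin n, (f i + c) =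
      ∑ k ∈ Finset.range (n + 1),
        (∑ t ∈ Finset.powersetCard k (Finset.univ : Finset (Fin n)), ∏ i ∈ t, f i) * c ^ (n - k) := by
  rw [Finset.prod_add, Finset.powerset_card_biUnion, Finset.sum_biUnion (fun i _ j _ h => Finset.pairwise_disjoint_powersetCard _ h)]
  simp only [Fintype.card_fin, Finset.card_univ]
  refine Finset.sum_congr rfl fun k hk => ?_
  rw [Finset.sum_mul]
  refine Finset.sum_congr rfl fun t ht => ?_
  rw [Finset.prod_const]
  congr 1
  rw [Finset.card_sdiff_of_subset (Finset.subset_univ t)]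
  simp only [Finset.card_univ, Fintype.card_fin]
  rw [(Finset.mem_powersetCard.mp ht).2]

end AuxStmt8

set_option maxHeartbeats 4000000 in
/-- **The rational parameterization (4.6) of the paper parameterizes the spectral curve
(4.5).** For `r ≥ 2`, the elements `x` and `y` of `F = ℚ(P,Q,Λ)(z)` satisfy
`Σ_{i=0}^{r} (−y)^{r−i} ( e_i(P_1,…,P_r)/(−x)^i
   + (−1)^r e_{i−1}(Q_0,…,Q_{r−2})/(Λ x^{i−1}) ) = 0`,
with the convention `e_{−1} = 0` (the `if` below). -/
theorem stmt8 (r : ℕ) (hr : 2 ≤ r) :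
    ∑ i ∈ Finset.range (r + 1),
        (-yf r) ^ (r - i) *
          (eP r i / (-xf r) ^ i +
            (-1 : FF r) ^ r * (if i = 0 then 0 else eQ r (i - 1)) /
              (Lam r * xf r ^ (i - 1))) = 0 := by
  classical
  set Z := zz r with hZ
  set L := Lam r with hLdef
  set A := ∏ i : Fin r, (Pv r i + zz r) with hAdef
  set B := ∏ j : Fin (r - 1), (Qv r j - zz r) with hBdef
  have hinj : Function.Injective (algebraMap (MvPolynomial (Idx r) ℚ) (FF r)) :=
    IsFractionRing.injective _ _
  have hne0 : ∀ p : MvPolynomial (Idx r) ℚ, p ≠ 0 →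
      algebraMap (MvPolynomial (Idx r) ℚ) (FF r) p ≠ 0 := by
    intro p hp h
    exact hp (hinj (by simpa using h))
  have hL0 : L ≠ 0 := by
    rw [hLdef]
    exact hne0 _ (MvPolynomial.X_ne_zero _)
  have hPz : ∀ i : Fin r, Pv r i + zz r ≠ 0 := by
    intro i
    have heq : Pv r i + zz r =
        algebraMap (MvPolynomial (Idx r) ℚ) (FF r)
          (X (Sum.inl i) + X (Sum.inr (Sum.inr 1))) := by
      simp [Pv, zz, par, map_add]
    rw [heq]
    apply hne0
    intro h
    have h2 := congrArg (MvPolynomial.eval (fun v : Idx r => if v = Sum.inl i then (1 : ℚ) else 0)) h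
    simp at h2
  have hQz : ∀ j : Fin (r - 1), Qv r j - zz r ≠ 0 := by
    intro j
    have heq : Qv r j - zz r =
        algebraMap (MvPolynomial (Idx r) ℚ) (FF r)
          (X (Sum.inr (Sum.inl j)) - X (Sum.inr (Sum.inr 1))) := by
      simp [Qv, zz, par, map_sub]
    rw [heq]
    apply hne0
    intro h
    have h2 := congrArg
      (MvPolynomial.eval (fun v : Idx r => if v = Sum.inr (Sum.inl j) then (1 : ℚ) else 0)) h
    simp at h2
  have hA0 : A ≠ 0 := by
    rw [hAdef]
    exact Finset.prod_ne_zero_iff.mpr fun i _ => hPz i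
  have hB0 : B ≠ 0 := by
    rw [hBdef]
    exact Finset.prod_ne_zero_iff.mpr fun j _ => hQz j
  set u := B / (L * A) with hudef
  clear_value Z L A B u
  have hu0 : u ≠ 0 := by
    rw [hudef]
    exact div_ne_zero hB0 (mul_ne_zero hL0 hA0)
  have hy' : -yf r = Z * u := by
    rw [hudef, hZ, hLdef, hAdef, hBdef]
    unfold yf
    ring
  have hxf : xf r = -u⁻¹ := by
    rw [hudef, hLdef, hAdef, hBdef]
    unfold xf
    rw [inv_div]
    ring
  have key : ∀ i ∈ Finset.range (r + 1),
      (-yf r) ^ (r - i) *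
          (eP r i / (-xf r) ^ i +
            (-1 : FF r) ^ r * (if i = 0 then 0 else eQ r (i - 1)) /
              (L * xf r ^ (i - 1)))
        = (eP r i * Z ^ (r - i)) * u ^ r +
            (if i = 0 then 0 else (-1 : FF r) ^ r * (eQ r (i - 1) * (-Z) ^ (r - i))) *
              ((-u) ^ (r - 1) / L) := by
    intro i hi
    rw [Finset.mem_range, Nat.lt_succ_iff] at hi
    rw [hy', hxf]
    rcases eq_or_ne i 0 with rfl | h0
    · simp only [↓reduceIte, Nat.sub_zero, pow_zero, neg_neg, div_one, mul_zero, zero_div,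
        add_zero, zero_mul, mul_pow]
      ring
    · obtain ⟨k, rfl⟩ : ∃ k, i = k + 1 := ⟨i - 1, by omega⟩
      obtain ⟨j, rfl⟩ : ∃ j, r = (k + 1) + j := ⟨r - (k + 1), by omega⟩
      simp only [if_neg h0]
      have e1 : (k + 1) + j - (k + 1) = j := by omega
      have e2 : k + 1 - 1 = k := rfl
      have e3 : (k + 1) + j - 1 = k + j := by omega
      rw [e1, e2, e3, mul_add]
      congr 1
      · rw [neg_neg, inv_pow, div_eq_mul_inv, inv_inv, mul_pow, pow_add]
        ring
      · rw [← inv_neg, inv_pow, div_eq_mul_inv, mul_inv, inv_inv, pow_add,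
          ← neg_mul_neg Z u, mul_pow]
        ring
  rw [Finset.sum_congr rfl key, Finset.sum_add_distrib, ← Finset.sum_mul, ← Finset.sum_mul]
  have hEP : ∑ i ∈ Finset.range (r + 1), eP r i * Z ^ (r - i) = A := by
    rw [hAdef, hZ]
    exact (prod_add_const'8 r (fun i => Pv r i) (zz r)).symm
  have hEQ : ∑ i ∈ Finset.range r, eQ r i * (-Z) ^ (r - 1 - i) = B := by
    rw [hZ, hBdef]
    have h := prod_add_const'8 (r - 1) (fun j => Qv r j) (-(zz r))
    rw [show (r - 1) + 1 = r by omega] at h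
    rw [show (∏ j : Fin (r - 1), (Qv r j - zz r)) = ∏ j : Fin (r - 1), (Qv r j + -(zz r)) from
      Finset.prod_congr rfl fun j _ => sub_eq_add_neg _ _]
    exact h.symm
  have hg : ∑ i ∈ Finset.range (r + 1),
      (if i = 0 then 0 else (-1 : FF r) ^ r * (eQ r (i - 1) * (-Z) ^ (r - i))) = (-1 : FF r) ^ r * B := by
    rw [Finset.sum_range_succ']
    have hterm : ∀ i ∈ Finset.range r,
        (if i + 1 = 0 then (0 : FF r) else (-1 : FF r) ^ r * (eQ r (i + 1 - 1) * (-Z) ^ (r - (i + 1))))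
          = (-1 : FF r) ^ r * (eQ r i * (-Z) ^ (r - 1 - i)) := by
      intro i hi
      rw [if_neg (Nat.succ_ne_zero i), Nat.add_sub_cancel, show r - (i + 1) = r - 1 - i by omega]
    rw [Finset.sum_congr rfl hterm, ← Finset.mul_sum, hEQ, if_pos rfl, add_zero]
  rw [hEP, hg]
  have hsign : (-1 : FF r) ^ r * (-1 : FF r) ^ (r - 1) = -1 := by
    rw [← pow_add, show r + (r - 1) = 2 * (r - 1) + 1 by omega, pow_succ, pow_mul]
    norm_num
  have hstep : (-1 : FF r) ^ r * B * ((-u) ^ (r - 1) / L) = -(B * (u ^ (r - 1) / L)) := by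
    rw [neg_pow u (r - 1), show (-1 : FF r) ^ r * B * ((-1 : FF r) ^ (r - 1) * u ^ (r - 1) / L)
        = ((-1 : FF r) ^ r * (-1 : FF r) ^ (r - 1)) * (B * (u ^ (r - 1) / L)) from by ring, hsign]
    ring
  rw [hstep]
  obtain ⟨m, rfl⟩ : ∃ m, r = m + 1 := ⟨r - 1, by omega⟩
  simp only [Nat.add_sub_cancel]
  rw [pow_succ, hudef]
  field_simp
  ring


end Stmt8
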